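/- arXiv:2512.16716 — 2 statements merged into one kernel-verified Lean document; each statement's English description precedes it below -/
import Mathlib

section
/- Let U ⊆ ℝ² be open, Φ : U → V a C² diffeomorphism onto an open set V ⊆ ℝ² whose Jacobian determinant det DΦ(x) is nonzero for every x ∈ U, and let v̂ : U → ℝ² be C¹. Define the Piola transform v : V → ℝ² by v(Φ(x)) = (det DΦ(x))⁻¹ · DΦ(x) v̂(x) for x ∈ U. Then for every x ∈ U, the divergence of v at Φ(x) satisfies (div v)(Φ(x)) = (det DΦ(x))⁻¹ · (div v̂)(x). -/
open ContinuousLinearMap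

lemma clm_eval {F : Type*} [NormedAddCommGroup F] [NormedSpace ℝ F]
    (L : (ℝ × ℝ) →L[ℝ] F) (p q : ℝ) :
    L (p, q) = p • L (1, 0) + q • L (0, 1) := by
  have h : ((p, q) : ℝ × ℝ) = p • ((1:ℝ), (0:ℝ)) + q • ((0:ℝ), (1:ℝ)) := by
    simp [Prod.ext_iff]
  rw [h, map_add, map_smul, map_smul]

lemma det2 (L : (ℝ × ℝ) →L[ℝ] (ℝ × ℝ)) :
    L.det = (L (1, 0)).1 * (L (0, 1)).2 - (L (0, 1)).1 * (L (1, 0)).2 := by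
  rw [show ContinuousLinearMap.det L = LinearMap.det (L : (ℝ × ℝ) →ₗ[ℝ] (ℝ × ℝ)) from rfl,
    ← LinearMap.det_toMatrix (Module.Basis.finTwoProd ℝ), Matrix.det_fin_two]
  simp [LinearMap.toMatrix_apply, Module.Basis.coe_finTwoProd_repr, Module.Basis.finTwoProd_zero,
    Module.Basis.finTwoProd_one]

set_option maxHeartbeats 4000000


/-- Divergence of a planar vector field: trace of the Fréchet derivative,
`div w = ∂w₁/∂x + ∂w₂/∂y`. -/
noncomputable def div2 (w : ℝ × ℝ → ℝ × ℝ) (p : ℝ × ℝ) : ℝ :=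
  (fderiv ℝ w p (1, 0)).1 + (fderiv ℝ w p (0, 1)).2

/-- The divergence of the Piola transform `v` of a reference field `vhat` under a
C² diffeomorphism `Φ` with nowhere-vanishing Jacobian determinant satisfies
`(div v)(Φ x) = (det DΦ x)⁻¹ * (div vhat)(x)` for every `x ∈ U`. -/
theorem piola_transform_divergence
    (U V : Set (ℝ × ℝ)) (hU : IsOpen U) (hV : IsOpen V)
    (Φ : ℝ × ℝ → ℝ × ℝ) (hΦ : ContDiffOn ℝ 2 Φ U)
    (hΦinj : Set.InjOn Φ U) (hΦonto : Φ '' U = V)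
    (hdet : ∀ x ∈ U, (fderiv ℝ Φ x).det ≠ 0)
    (vhat : ℝ × ℝ → ℝ × ℝ) (hvhat : ContDiffOn ℝ 1 vhat U)
    (v : ℝ × ℝ → ℝ × ℝ)
    (hv : ∀ x ∈ U, v (Φ x) = ((fderiv ℝ Φ x).det)⁻¹ • (fderiv ℝ Φ x (vhat x))) :
    ∀ x ∈ U, div2 v (Φ x) = ((fderiv ℝ Φ x).det)⁻¹ * div2 vhat x := by
  intro x₀ hx₀
  have hmem : U ∈ nhds x₀ := hU.mem_nhds hx₀
  have hΦx : ContDiffAt ℝ 2 Φ x₀ := hΦ.contDiffAt hmem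
  have hstrict : HasStrictFDerivAt Φ (fderiv ℝ Φ x₀) x₀ :=
    hΦx.hasStrictFDerivAt (by norm_num)
  have hdet₀ : (fderiv ℝ Φ x₀).det ≠ 0 := hdet x₀ hx₀
  set A := fderiv ℝ Φ x₀ with hAdef
  let A' : (ℝ × ℝ) ≃L[ℝ] (ℝ × ℝ) :=
    (LinearMap.equivOfDetNeZero (A : (ℝ × ℝ) →ₗ[ℝ] (ℝ × ℝ)) hdet₀).toContinuousLinearEquiv
  have hA' : (A' : (ℝ × ℝ) →L[ℝ] (ℝ × ℝ)) = A := ContinuousLinearMap.ext fun x => rfl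
  have hstrict' : HasStrictFDerivAt Φ (A' : (ℝ × ℝ) →L[ℝ] (ℝ × ℝ)) x₀ := hA' ▸ hstrict
  set Ψ := hstrict'.localInverse Φ A' x₀ with hΨdef
  have hΨx : HasStrictFDerivAt Ψ (A'.symm : (ℝ × ℝ) →L[ℝ] (ℝ × ℝ)) (Φ x₀) :=
    hstrict'.to_localInverse
  have hΨ0 : Ψ (Φ x₀) = x₀ := hstrict'.localInverse_apply_image
  -- second derivative
  have hG : ContDiffOn ℝ 1 (fun y => fderiv ℝ Φ y) U := hΦ.fderiv_of_isOpen hU (by norm_num)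
  have hGd : DifferentiableAt ℝ (fun y => fderiv ℝ Φ y) x₀ :=
    (hG.contDiffAt hmem).differentiableAt one_ne_zero
  set B := fderiv ℝ (fun y => fderiv ℝ Φ y) x₀ with hBdef
  have hBd : HasFDerivAt (fun y => fderiv ℝ Φ y) B x₀ := hGd.hasFDerivAt
  have hsymm : ∀ p q, B p q = B q p := hΦx.isSymmSndFDerivAt (by simp)
  -- vhat derivative
  have hvd : DifferentiableAt ℝ vhat x₀ := (hvhat.contDiffAt hmem).differentiableAt one_ne_zero
  set M := fderiv ℝ vhat x₀ with hMdef
  have hMd : HasFDerivAt vhat M x₀ := hvd.hasFDerivAt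
  -- entry functions
  have hcomp : ∀ (w : ℝ × ℝ), HasFDerivAt (fun y => (fderiv ℝ Φ y) w)
      ((ContinuousLinearMap.apply ℝ (ℝ × ℝ) w).comp B) x₀ :=
    fun w => ((ContinuousLinearMap.apply ℝ (ℝ × ℝ) w).hasFDerivAt).comp x₀ hBd
  have ha := (hcomp (1, 0)).fst
  have hb := (hcomp (0, 1)).fst
  have hc := (hcomp (1, 0)).snd
  have he := (hcomp (0, 1)).snd
  have hj' := (ha.mul he).sub (hb.mul hc)
  have hdet₀' : ((fderiv ℝ Φ x₀) (1, 0)).1 * ((fderiv ℝ Φ x₀) (0, 1)).2 -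
      ((fderiv ℝ Φ x₀) (0, 1)).1 * ((fderiv ℝ Φ x₀) (1, 0)).2 ≠ 0 := by
    rw [← det2]; exact hdet₀
  have hinv := (hasFDerivAt_inv hdet₀').comp x₀ hj'
  have happ := hBd.clm_apply hMd
  have hFd' := hinv.smul happ
  have hFd : HasFDerivAt (fun y => ((fderiv ℝ Φ y).det)⁻¹ • ((fderiv ℝ Φ y) (vhat y))) _ x₀ :=
    hFd'.congr_of_eventuallyEq (Filter.Eventually.of_forall fun y => by simp only [det2, Function.comp_apply, Pi.smul_apply', Pi.sub_apply, Pi.mul_apply])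
  have hvev : v =ᶠ[nhds (Φ x₀)]
      ((fun y => ((fderiv ℝ Φ y).det)⁻¹ • ((fderiv ℝ Φ y) (vhat y))) ∘ Ψ) := by
    have h1 := hstrict'.eventually_right_inverse
    have h2 : ∀ᶠ y in nhds (Φ x₀), Ψ y ∈ U := by
      have hcont : ContinuousAt Ψ (Φ x₀) := hstrict'.localInverse_continuousAt
      apply hcont.eventually_mem
      rw [hΨ0]; exact hmem
    filter_upwards [h1, h2] with y hy1 hy2
    have hvy := hv (Ψ y) hy2
    rw [hy1] at hvy
    exact hvy
  have hdiffΨ : DifferentiableAt ℝ Ψ (Φ x₀) := hΨx.differentiableAt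
  have hdiffF : DifferentiableAt ℝ
      (fun y => ((fderiv ℝ Φ y).det)⁻¹ • ((fderiv ℝ Φ y) (vhat y))) (Ψ (Φ x₀)) := by
    rw [hΨ0]; exact hFd.differentiableAt
  have hfv : fderiv ℝ v (Φ x₀) =
      (fderiv ℝ (fun y => ((fderiv ℝ Φ y).det)⁻¹ • ((fderiv ℝ Φ y) (vhat y))) x₀).comp
        (A'.symm : (ℝ × ℝ) →L[ℝ] (ℝ × ℝ)) := by
    rw [hvev.fderiv_eq, fderiv_comp _ hdiffF hdiffΨ, hΨ0, hΨx.hasFDerivAt.fderiv]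
  rw [hFd.fderiv] at hfv
  rw [div2, div2, hfv]
  rw [← hMdef, ← hAdef]
  -- scalar names
  set p := ((A'.symm : (ℝ × ℝ) →L[ℝ] (ℝ × ℝ)) (1, 0)).1 with hp'
  set q := ((A'.symm : (ℝ × ℝ) →L[ℝ] (ℝ × ℝ)) (1, 0)).2 with hq'
  set r := ((A'.symm : (ℝ × ℝ) →L[ℝ] (ℝ × ℝ)) (0, 1)).1 with hr'
  set s := ((A'.symm : (ℝ × ℝ) →L[ℝ] (ℝ × ℝ)) (0, 1)).2 with hs'
  have hw1 : (A'.symm : (ℝ × ℝ) →L[ℝ] (ℝ × ℝ)) (1, 0) = (p, q) := rfl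
  have hw2 : (A'.symm : (ℝ × ℝ) →L[ℝ] (ℝ × ℝ)) (0, 1) = (r, s) := rfl
  set u1 := (vhat x₀).1 with hu1'
  set u2 := (vhat x₀).2 with hu2'
  have hu : vhat x₀ = (u1, u2) := rfl
  -- linear system for p q r s
  have hAw1 : A ((A'.symm : (ℝ × ℝ) →L[ℝ] (ℝ × ℝ)) (1, 0)) = (1, 0) := by
    rw [← hA']; exact A'.apply_symm_apply (1, 0)
  have hAw2 : A ((A'.symm : (ℝ × ℝ) →L[ℝ] (ℝ × ℝ)) (0, 1)) = (0, 1) := by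
    rw [← hA']; exact A'.apply_symm_apply (0, 1)
  rw [hw1] at hAw1
  rw [hw2] at hAw2
  rw [clm_eval A p q] at hAw1
  rw [clm_eval A r s] at hAw2
  have h1 := congrArg Prod.fst hAw1
  have h2 := congrArg Prod.snd hAw1
  have h3 := congrArg Prod.fst hAw2
  have h4 := congrArg Prod.snd hAw2
  simp only [Prod.fst_add, Prod.snd_add, Prod.smul_fst, Prod.smul_snd, smul_eq_mul] at h1 h2 h3 h4
  -- symmetry of second derivative
  have hs1 := congrArg Prod.fst (hsymm (0, 1) (1, 0))
  have hs2 := congrArg Prod.snd (hsymm (0, 1) (1, 0))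
  -- expand goal applications
  simp only [ContinuousLinearMap.comp_apply, ContinuousLinearMap.add_apply,
    ContinuousLinearMap.smul_apply, ContinuousLinearMap.sub_apply,
    ContinuousLinearMap.smulRight_apply, ContinuousLinearMap.flip_apply,
    ContinuousLinearMap.one_apply, ContinuousLinearMap.apply_apply,
    ContinuousLinearMap.coe_comp', ContinuousLinearMap.coe_fst', ContinuousLinearMap.coe_snd',
    Function.comp_apply, hw1, hw2, hu, Pi.sub_apply, Pi.mul_apply, ContinuousLinearMap.toSpanSingleton_apply,
    Prod.smul_fst, Prod.smul_snd, Prod.fst_add, Prod.snd_add, smul_eq_mul]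
  rw [← hAdef]
  rw [clm_eval M p q, clm_eval M r s, clm_eval B p q, clm_eval B r s, clm_eval A u1 u2, det2 A]
  simp only [map_add, map_smul, ContinuousLinearMap.add_apply, ContinuousLinearMap.smul_apply,
    Prod.smul_fst, Prod.smul_snd, Prod.fst_add, Prod.snd_add, smul_eq_mul]
  rw [clm_eval (B (1, 0)) u1 u2, clm_eval (B (0, 1)) u1 u2]
  simp only [map_add, map_smul, ContinuousLinearMap.add_apply, ContinuousLinearMap.smul_apply,
    Prod.smul_fst, Prod.smul_snd, Prod.fst_add, Prod.snd_add, smul_eq_mul]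
  set m11 := (M (1, 0)).1 with hm11'
  set m21 := (M (1, 0)).2 with hm21'
  set m12 := (M (0, 1)).1 with hm12'
  set m22 := (M (0, 1)).2 with hm22'
  have hM1 : M (1, 0) = (m11, m21) := rfl
  have hM2 : M (0, 1) = (m12, m22) := rfl
  rw [hM1, hM2, clm_eval A m11 m21, clm_eval A m12 m22]
  simp only [Prod.smul_fst, Prod.smul_snd, Prod.fst_add, Prod.snd_add,
    ContinuousLinearMap.add_apply, ContinuousLinearMap.smul_apply, smul_eq_mul]
  set a0 := (A (1, 0)).1 with ha0'
  set c0 := (A (1, 0)).2 with hc0'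
  set b0 := (A (0, 1)).1 with hb0'
  set e0 := (A (0, 1)).2 with he0'
  have hJ : a0 * e0 - b0 * c0 ≠ 0 := hdet₀'
  have hp : p = e0 / (a0 * e0 - b0 * c0) := by
    rw [eq_div_iff hJ]
    linear_combination e0 * h1 - b0 * h2
  have hq : q = -(c0 / (a0 * e0 - b0 * c0)) := by
    rw [← neg_div, eq_div_iff hJ]
    linear_combination a0 * h2 - c0 * h1
  have hr : r = -(b0 / (a0 * e0 - b0 * c0)) := by
    rw [← neg_div, eq_div_iff hJ]
    linear_combination e0 * h3 - b0 * h4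
  have hs : s = a0 / (a0 * e0 - b0 * c0) := by
    rw [eq_div_iff hJ]
    linear_combination a0 * h4 - c0 * h3
  rw [hs1, hs2, hp, hq, hr, hs]
  field_simp
  ring
end

section
/- Let v₁=(0,0), v₂=(2,0), v₃=(1,2), v₄=(0,2) be the vertices of the trapezoid T, with edges e₁ from v₂ to v₃, e₂ from v₃ to v₄, e₃ from v₄ to v₁, e₄ from v₁ to v₂. Define the rational vector field Ψ₄(x,y) = ( (4x−4+y)/(4−y) + 4x(y−1)/(4−y)², 4(1−y)/(4−y) ) on {(x,y) ∈ ℝ² : y < 4}. Then the outward-normal fluxes of Ψ₄ across the four edges are ∫_{e₁} Ψ₄·n ds = 2, ∫_{e₂} Ψ₄·n ds = −2, ∫_{e₃} Ψ₄·n ds = 2, ∫_{e₄} Ψ₄·n ds = −2. -/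
/-- Rotation of a planar vector by 90° clockwise: `rot (w₁, w₂) = (w₂, -w₁)`. -/
def rot2 (w : ℝ × ℝ) : ℝ × ℝ := (w.2, -w.1)

/-- Euclidean dot product on `ℝ × ℝ`. -/
def dot2 (p q : ℝ × ℝ) : ℝ := p.1 * q.1 + p.2 * q.2

/-- Outward-normal flux of a vector field `u` across the segment from `a` to `b`:
`∫₀¹ u((1−t)a + t b) · rot(b − a) dt`. -/
noncomputable def normalFlux (u : ℝ × ℝ → ℝ × ℝ) (a b : ℝ × ℝ) : ℝ :=
  ∫ t in (0:ℝ)..1, dot2 (u ((1 - t) • a + t • b)) (rot2 (b - a))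

/-- The fourth candidate AC₀ basis field on the trapezoid, given in physical
coordinates (defined for y < 4). -/
noncomputable def Psi4 (p : ℝ × ℝ) : ℝ × ℝ :=
  ((4 * p.1 - 4 + p.2) / (4 - p.2) + 4 * p.1 * (p.2 - 1) / (4 - p.2) ^ 2,
    4 * (1 - p.2) / (4 - p.2))

/-- The outward-normal fluxes of Ψ₄ across the edges e₁ (v₂→v₃), e₂ (v₃→v₄),
e₃ (v₄→v₁), e₄ (v₁→v₂) of the trapezoid with vertices v₁=(0,0), v₂=(2,0),
v₃=(1,2), v₄=(0,2) are 2, −2, 2, −2. -/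
theorem trapezoid_Psi4_edge_fluxes :
    normalFlux Psi4 ((2:ℝ), (0:ℝ)) ((1:ℝ), (2:ℝ)) = 2 ∧
    normalFlux Psi4 ((1:ℝ), (2:ℝ)) ((0:ℝ), (2:ℝ)) = -2 ∧
    normalFlux Psi4 ((0:ℝ), (2:ℝ)) ((0:ℝ), (0:ℝ)) = 2 ∧
    normalFlux Psi4 ((0:ℝ), (0:ℝ)) ((2:ℝ), (0:ℝ)) = -2 := by
  refine ⟨?_, ?_, ?_, ?_⟩
  · rw [normalFlux, intervalIntegral.integral_congr
      (g := fun _ => (2:ℝ)) ?_]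
    · simp
    · intro t ht
      rw [Set.uIcc_of_le (by norm_num)] at ht
      have h4 : (4 : ℝ) - t * 2 ≠ 0 := by nlinarith [ht.2]
      have hsq : (16 : ℝ) - t * 16 + t ^ 2 * 4 ≠ 0 := by nlinarith [ht.1, ht.2, sq_nonneg t]
      have h2 : (2 : ℝ) - t ≠ 0 := by nlinarith [ht.2]
      have h8 : (16 : ℝ) * (1 - t) + t ^ 2 * 4 ≠ 0 := by nlinarith [ht.1, ht.2, sq_nonneg t]
      simp only [Psi4, dot2, rot2, Prod.mk_sub_mk, Prod.smul_mk, Prod.mk_add_mk,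
        smul_eq_mul]
      ring_nf
      field_simp
      ring
  · rw [normalFlux, intervalIntegral.integral_congr
      (g := fun _ => (-2:ℝ)) ?_]
    · simp
    · intro t ht
      simp only [Psi4, dot2, rot2, Prod.mk_sub_mk, Prod.smul_mk, Prod.mk_add_mk,
        smul_eq_mul]
      ring_nf
  · rw [normalFlux, intervalIntegral.integral_congr
      (g := fun _ => (2:ℝ)) ?_]
    · simp
    · intro t ht
      rw [Set.uIcc_of_le (by norm_num)] at ht
      have h4 : (2 : ℝ) + t * 2 ≠ 0 := by nlinarith [ht.1]
      have h1 : (1 : ℝ) + t ≠ 0 := by nlinarith [ht.1]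
      simp only [Psi4, dot2, rot2, Prod.mk_sub_mk, Prod.smul_mk, Prod.mk_add_mk,
        smul_eq_mul]
      ring_nf
      field_simp
      ring
  · rw [normalFlux, intervalIntegral.integral_congr
      (g := fun _ => (-2:ℝ)) ?_]
    · simp
    · intro t ht
      simp only [Psi4, dot2, rot2, Prod.mk_sub_mk, Prod.smul_mk, Prod.mk_add_mk,
        smul_eq_mul]
      norm_num
end
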